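/- Let n ≥ 1 be an integer and let T₀ = conv{ρ₀, ρ_u, ρ_v} and T₁ = conv{ρ₁, ρ_u, ρ_v} be two adjacent A_n-triangles in ℤ³, and let w₀, w₁ ∈ Hom(ℤ³, ℤ) be the unique linear forms taking the value 1 on the vertices of T₀ and of T₁ respectively. Then the lattice length of the segment from w₀ to w₁ in the dual lattice, i.e. the gcd of the three coordinates of w₀ − w₁ (with respect to the dual basis), equals |1 − ⟨w₁, ρ₀⟩|. -/

import Mathlib

open Matrix

/-- The coordinatewise embedding `ℤ³ → ℝ³`. -/
def toR3 (v : Fin 3 → ℤ) : Fin 3 → ℝ := fun i => (v i : ℝ)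

/-- The lattice length of the segment between two lattice points `p, q ∈ ℤ³`:
the gcd of the coordinates of `q − p`. -/
def latticeLength (p q : Fin 3 → ℤ) : ℕ :=
  Int.gcd (q 0 - p 0) ((Int.gcd (q 1 - p 1) (q 2 - p 2) : ℕ) : ℤ)

/-- The relative interior of the triangle with vertices `a, b, c ∈ ℝ³`: points with all
barycentric coordinates (strictly) positive. -/
def relIntTriangle (a b c : Fin 3 → ℝ) : Set (Fin 3 → ℝ) :=
  {x | ∃ t₁ t₂ t₃ : ℝ, 0 < t₁ ∧ 0 < t₂ ∧ 0 < t₃ ∧ t₁ + t₂ + t₃ = 1 ∧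
    x = t₁ • a + t₂ • b + t₃ • c}

/-- An `Aₙ`-triangle in `ℤ³`: three affinely independent lattice points such that (1) the
relative interior of their convex hull contains no lattice point, (2) the edges have lattice
lengths `1`, `1`, `n+1`, (3) some linear form `w ∈ Hom(ℤ³, ℤ)` takes the value `1` on all
three vertices. -/
structure IsAnTriangle (n : ℕ) (v₁ v₂ v₃ : Fin 3 → ℤ) : Prop where
  affInd : AffineIndependent ℝ ![toR3 v₁, toR3 v₂, toR3 v₃]
  no_interior_point : ∀ p : Fin 3 → ℤ, toR3 p ∉ relIntTriangle (toR3 v₁) (toR3 v₂) (toR3 v₃)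
  edge_lengths : ({latticeLength v₁ v₂, latticeLength v₂ v₃, latticeLength v₁ v₃} : Multiset ℕ)
    = {1, 1, n + 1}
  height_one : ∃ w : Fin 3 → ℤ, w ⬝ᵥ v₁ = 1 ∧ w ⬝ᵥ v₂ = 1 ∧ w ⬝ᵥ v₃ = 1

/-- Two adjacent `Aₙ`-triangles `T₀ = conv{ρ₀, ρᵤ, ρᵥ}` and `T₁ = conv{ρ₁, ρᵤ, ρᵥ}` in `ℤ³`:
both are `Aₙ`-triangles, the common edge `conv{ρᵤ, ρᵥ}` is the edge of lattice length `n+1`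
of both, and `ρ₀`, `ρ₁` lie in the two different open half-spaces of `ℝ³` determined by the
plane spanned by `ρᵤ` and `ρᵥ`. -/
structure AreAdjacentAnTriangles (n : ℕ) (ρ₀ ρ₁ ρu ρv : Fin 3 → ℤ) : Prop where
  t₀ : IsAnTriangle n ρ₀ ρu ρv
  t₁ : IsAnTriangle n ρ₁ ρu ρv
  common_edge_length : latticeLength ρu ρv = n + 1
  opposite_sides : ∃ φ : (Fin 3 → ℝ) →ₗ[ℝ] ℝ,
    φ (toR3 ρu) = 0 ∧ φ (toR3 ρv) = 0 ∧ φ (toR3 ρ₀) < 0 ∧ 0 < φ (toR3 ρ₁)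

lemma int_of_mul_int (v : Fin 3 → ℤ)
    (hv : Int.gcd (v 0) ((Int.gcd (v 1) (v 2) : ℕ) : ℤ) = 1) (α : ℝ)
    (k : Fin 3 → ℤ) (hα : ∀ i, α * (v i : ℝ) = (k i : ℝ)) : ∃ A : ℤ, α = (A : ℝ) := by
  set g12 : ℤ := ((Int.gcd (v 1) (v 2) : ℕ) : ℤ) with hg12
  have h1 : ((Int.gcd (v 0) g12 : ℕ) : ℤ) = v 0 * Int.gcdA (v 0) g12 + g12 * Int.gcdB (v 0) g12 :=
    Int.gcd_eq_gcd_ab _ _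
  rw [hv] at h1
  have h2 : g12 = v 1 * Int.gcdA (v 1) (v 2) + v 2 * Int.gcdB (v 1) (v 2) := Int.gcd_eq_gcd_ab _ _
  set A := Int.gcdA (v 0) g12
  set B := Int.gcdB (v 0) g12
  set C := Int.gcdA (v 1) (v 2)
  set D := Int.gcdB (v 1) (v 2)
  have hBez : v 0 * A + v 1 * (C * B) + v 2 * (D * B) = 1 := by
    rw [h2] at h1; push_cast at h1; linear_combination -h1
  have hBezR : (v 0 : ℝ) * A + (v 1 : ℝ) * (C * B) + (v 2 : ℝ) * (D * B) = 1 := by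
    exact_mod_cast congrArg (fun z : ℤ => (z : ℝ)) hBez
  refine ⟨k 0 * A + k 1 * (C * B) + k 2 * (D * B), ?_⟩
  push_cast
  linear_combination (A : ℝ) * hα 0 + ((C : ℝ) * B) * hα 1 + ((D : ℝ) * B) * hα 2 - α * hBezR


lemma interior_pt (n : ℕ) (hn : 1 ≤ n) (ρ₀ ρu ρv b' : Fin 3 → ℤ)
    (hbR : ∀ j, ((ρv j : ℝ)) - (ρu j : ℝ) = ((n : ℝ) + 1) * (b' j : ℝ))
    (x : Fin 3 → ℤ) (α β : ℝ) (A B : ℤ)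
    (hx : ∀ j, (x j : ℝ) = α * ((ρ₀ j : ℝ) - (ρu j : ℝ)) + β * (b' j : ℝ))
    (h1 : 0 < α - A) (h2 : α - A ≤ 1/2) (h3 : 0 < β - B) (h4 : β - B < 1) :
    ∃ p : Fin 3 → ℤ, toR3 p ∈ relIntTriangle (toR3 ρ₀) (toR3 ρu) (toR3 ρv) := by
  have hn1 : (0 : ℝ) < (n : ℝ) + 1 := by positivity
  have hn2 : (2 : ℝ) ≤ (n : ℝ) + 1 := by
    have : (1 : ℝ) ≤ (n : ℝ) := by exact_mod_cast hn
    linarith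
  refine ⟨fun i => x i - A * (ρ₀ i - ρu i) - B * b' i + ρu i, ?_⟩
  set t₁ : ℝ := α - A with ht₁
  set t₃ : ℝ := (β - B) / ((n : ℝ) + 1) with ht₃
  have h3' : t₃ * ((n : ℝ) + 1) = β - B := by
    rw [ht₃]; exact div_mul_cancel₀ _ hn1.ne'
  have ht₃pos : 0 < t₃ := div_pos h3 hn1
  have ht₃lt : t₃ < 1 / 2 := by
    nlinarith [mul_le_mul_of_nonneg_left hn2 ht₃pos.le]
  refine ⟨t₁, 1 - t₁ - t₃, t₃, h1, by nlinarith, ht₃pos, by ring, ?_⟩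
  funext i
  show ((x i - A * (ρ₀ i - ρu i) - B * b' i + ρu i : ℤ) : ℝ)
    = t₁ * (ρ₀ i : ℝ) + (1 - t₁ - t₃) * (ρu i : ℝ) + t₃ * (ρv i : ℝ)
  push_cast
  linear_combination hx i - t₃ * hbR i - (b' i : ℝ) * h3'


lemma key_basis (n : ℕ) (hn : 1 ≤ n) (ρ₀ ρu ρv b' : Fin 3 → ℤ)
    (hb : ∀ i, ρv i - ρu i = ((n : ℤ) + 1) * b' i)
    (hb1 : Int.gcd (b' 0) ((Int.gcd (b' 1) (b' 2) : ℕ) : ℤ) = 1)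
    (ha1 : Int.gcd (ρ₀ 0 - ρu 0) ((Int.gcd (ρ₀ 1 - ρu 1) (ρ₀ 2 - ρu 2) : ℕ) : ℤ) = 1)
    (haff : AffineIndependent ℝ ![toR3 ρ₀, toR3 ρu, toR3 ρv])
    (hni : ∀ p : Fin 3 → ℤ, toR3 p ∉ relIntTriangle (toR3 ρ₀) (toR3 ρu) (toR3 ρv))
    (w₀ : Fin 3 → ℤ) (h0 : w₀ ⬝ᵥ ρ₀ = 1) (hu : w₀ ⬝ᵥ ρu = 1) (hv : w₀ ⬝ᵥ ρv = 1)
    (z : Fin 3 → ℤ) :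
    ∃ p q r : ℤ, ∀ i, z i = p * ρu i + q * (ρ₀ i - ρu i) + r * b' i := by
  have h0' : w₀ 0 * ρ₀ 0 + w₀ 1 * ρ₀ 1 + w₀ 2 * ρ₀ 2 = 1 := by
    simpa [dotProduct, Fin.sum_univ_three] using h0
  have hu' : w₀ 0 * ρu 0 + w₀ 1 * ρu 1 + w₀ 2 * ρu 2 = 1 := by
    simpa [dotProduct, Fin.sum_univ_three] using hu
  have hv' : w₀ 0 * ρv 0 + w₀ 1 * ρv 1 + w₀ 2 * ρv 2 = 1 := by
    simpa [dotProduct, Fin.sum_univ_three] using hv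
  have h0R : (w₀ 0 : ℝ) * ρ₀ 0 + (w₀ 1 : ℝ) * ρ₀ 1 + (w₀ 2 : ℝ) * ρ₀ 2 = 1 := by exact_mod_cast h0'
  have huR : (w₀ 0 : ℝ) * ρu 0 + (w₀ 1 : ℝ) * ρu 1 + (w₀ 2 : ℝ) * ρu 2 = 1 := by exact_mod_cast hu'
  have hvR : (w₀ 0 : ℝ) * ρv 0 + (w₀ 1 : ℝ) * ρv 1 + (w₀ 2 : ℝ) * ρv 2 = 1 := by exact_mod_cast hv'
  have hbR : ∀ j, ((ρv j : ℝ)) - (ρu j : ℝ) = ((n : ℝ) + 1) * (b' j : ℝ) := by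
    intro j
    exact_mod_cast hb j
  -- linear independence of the three vertices over ℝ
  have hLI : LinearIndependent ℝ ![toR3 ρ₀, toR3 ρu, toR3 ρv] := by
    rw [Fintype.linearIndependent_iff]
    intro g hg
    have hgc : ∀ j, g 0 * (ρ₀ j : ℝ) + g 1 * (ρu j : ℝ) + g 2 * (ρv j : ℝ) = 0 := by
      intro j
      have := congrFun hg j
      simpa [Fin.sum_univ_three, toR3] using this
    have hsum : g 0 + g 1 + g 2 = 0 := by
      linear_combination (w₀ 0 : ℝ) * hgc 0 + (w₀ 1 : ℝ) * hgc 1 + (w₀ 2 : ℝ) * hgc 2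
        - g 0 * h0R - g 1 * huR - g 2 * hvR
    intro i
    exact affineIndependent_iff.mp haff Finset.univ g
      (by simpa [Fin.sum_univ_three] using hsum) (by simpa using hg) i (Finset.mem_univ i)
  set M : Matrix (Fin 3) (Fin 3) ℝ := Matrix.of ![toR3 ρ₀, toR3 ρu, toR3 ρv] with hM
  have hMunit : IsUnit M := by
    rw [← Matrix.linearIndependent_rows_iff_isUnit]
    exact hLI
  have hdet : IsUnit M.det := (Matrix.isUnit_iff_isUnit_det M).mp hMunit
  set s : ℤ := w₀ ⬝ᵥ z with hs
  set x : Fin 3 → ℤ := fun i => z i - s * ρu i with hx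
  have hsz : w₀ 0 * z 0 + w₀ 1 * z 1 + w₀ 2 * z 2 = s := by
    simp [hs, dotProduct, Fin.sum_univ_three]
  have hx0 : w₀ 0 * x 0 + w₀ 1 * x 1 + w₀ 2 * x 2 = 0 := by
    simp only [hx]
    linear_combination hsz - s * hu'
  have hx0R : (w₀ 0 : ℝ) * x 0 + (w₀ 1 : ℝ) * x 1 + (w₀ 2 : ℝ) * x 2 = 0 := by exact_mod_cast hx0
  have hc : (toR3 x ᵥ* M⁻¹) ᵥ* M = toR3 x := by
    rw [Matrix.vecMul_vecMul, Matrix.nonsing_inv_mul M hdet, Matrix.vecMul_one]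
  set c : Fin 3 → ℝ := toR3 x ᵥ* M⁻¹ with hcdef
  have hxc : ∀ j, (x j : ℝ) = c 0 * ρ₀ j + c 1 * ρu j + c 2 * ρv j := by
    intro j
    have h5 := congrFun hc j
    simp only [Matrix.vecMul, dotProduct, Fin.sum_univ_three, hM, Matrix.of_apply] at h5
    fin_cases j <;> simpa [toR3] using h5.symm
  have hsum : c 0 + c 1 + c 2 = 0 := by
    linear_combination hx0R - (w₀ 0 : ℝ) * hxc 0 - (w₀ 1 : ℝ) * hxc 1 - (w₀ 2 : ℝ) * hxc 2
      - c 0 * h0R - c 1 * huR - c 2 * hvR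
  set α : ℝ := c 0 with hα
  set β : ℝ := ((n : ℝ) + 1) * c 2 with hβ
  have hxab : ∀ j, (x j : ℝ) = α * ((ρ₀ j : ℝ) - (ρu j : ℝ)) + β * (b' j : ℝ) := by
    intro j
    rw [hα, hβ]
    linear_combination hxc j + (ρu j : ℝ) * hsum + c 2 * hbR j
  by_cases hA : ∃ A : ℤ, α = (A : ℝ)
  · obtain ⟨A, hAe⟩ := hA
    rw [hAe] at hxab
    have hβk : ∀ i, β * (b' i : ℝ) = ((x i - A * (ρ₀ i - ρu i) : ℤ) : ℝ) := by
      intro i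
      push_cast
      linear_combination -hxab i
    obtain ⟨B, hBe⟩ := int_of_mul_int b' hb1 β (fun i => x i - A * (ρ₀ i - ρu i)) hβk
    refine ⟨s, A, B, fun i => ?_⟩
    have h3 := hxab i
    rw [hBe] at h3
    have h4 : (x i : ℝ) = (z i : ℝ) - (s : ℝ) * (ρu i : ℝ) := by
      simp only [hx]
      push_cast
      ring
    have h2 : ((z i : ℝ)) = (s : ℝ) * (ρu i : ℝ) + (A : ℝ) * ((ρ₀ i : ℝ) - (ρu i : ℝ))
        + (B : ℝ) * (b' i : ℝ) := by linear_combination h3 - h4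
    exact_mod_cast h2
  · exfalso
    have hαne : ∀ A : ℤ, α ≠ (A : ℝ) := fun A hAe => hA ⟨A, hAe⟩
    have hβne : ∀ B : ℤ, β ≠ (B : ℝ) := by
      intro B hBe
      apply hA
      refine int_of_mul_int (fun i => ρ₀ i - ρu i) ha1 α (fun i => x i - B * b' i) ?_
      intro i
      rw [hBe] at hxab
      push_cast
      linear_combination -hxab i
    have hA1 : (⌊α⌋ : ℝ) < α := lt_of_le_of_ne (Int.floor_le α) (Ne.symm (hαne ⌊α⌋))
    have hA2 : α < ⌊α⌋ + 1 := Int.lt_floor_add_one α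
    have hB1 : (⌊β⌋ : ℝ) < β := lt_of_le_of_ne (Int.floor_le β) (Ne.symm (hβne ⌊β⌋))
    have hB2 : β < ⌊β⌋ + 1 := Int.lt_floor_add_one β
    by_cases hhalf : α - ⌊α⌋ ≤ 1/2
    · obtain ⟨p, hp⟩ := interior_pt n hn ρ₀ ρu ρv b' hbR x α β ⌊α⌋ ⌊β⌋ hxab
        (by linarith) hhalf (by linarith) (by linarith)
      exact hni p hp
    · have hx' : ∀ j, ((- x j : ℤ) : ℝ) = (-α) * ((ρ₀ j : ℝ) - (ρu j : ℝ)) + (-β) * (b' j : ℝ) := by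
        intro j
        push_cast
        linear_combination -hxab j
      obtain ⟨p, hp⟩ := interior_pt n hn ρ₀ ρu ρv b' hbR (fun j => - x j) (-α) (-β)
        (-⌊α⌋ - 1) (-⌊β⌋ - 1) hx'
        (by push_cast; linarith) (by push_cast; linarith)
        (by push_cast; linarith) (by push_cast; linarith)
      exact hni p hp


/-- For two adjacent `Aₙ`-triangles with supporting linear forms `w₀`, `w₁`,
the lattice length of the segment from `w₀` to `w₁` in the dual lattice (the gcd of the
coordinates of `w₀ − w₁` in the dual basis) equals `|1 − ⟨w₁, ρ₀⟩|`. -/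
theorem adjacent_An_triangles_dual_edge_length
    (n : ℕ) (hn : 1 ≤ n) (ρ₀ ρ₁ ρu ρv : Fin 3 → ℤ)
    (h : AreAdjacentAnTriangles n ρ₀ ρ₁ ρu ρv)
    (w₀ w₁ : Fin 3 → ℤ)
    (hw₀ : w₀ ⬝ᵥ ρ₀ = 1 ∧ w₀ ⬝ᵥ ρu = 1 ∧ w₀ ⬝ᵥ ρv = 1)
    (hw₁ : w₁ ⬝ᵥ ρ₁ = 1 ∧ w₁ ⬝ᵥ ρu = 1 ∧ w₁ ⬝ᵥ ρv = 1) :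
    ((latticeLength w₀ w₁ : ℤ)) = |1 - w₁ ⬝ᵥ ρ₀| := by
  obtain ⟨hw00, hw0u, hw0v⟩ := hw₀
  obtain ⟨hw11, hw1u, hw1v⟩ := hw₁
  -- divisibility of the long edge coordinates by n+1
  have hguv : Int.gcd (ρv 0 - ρu 0) ((Int.gcd (ρv 1 - ρu 1) (ρv 2 - ρu 2) : ℕ) : ℤ) = n + 1 :=
    h.common_edge_length
  have hdvd : ∀ i, ((n : ℤ) + 1) ∣ (ρv i - ρu i) := by
    have e0 : (((n : ℕ) + 1 : ℕ) : ℤ) ∣ (ρv 0 - ρu 0) := by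
      rw [← hguv]; exact Int.gcd_dvd_left _ _
    have e12 : (((n : ℕ) + 1 : ℕ) : ℤ) ∣ ((Int.gcd (ρv 1 - ρu 1) (ρv 2 - ρu 2) : ℕ) : ℤ) := by
      rw [← hguv]; exact Int.gcd_dvd_right _ _
    intro i
    fin_cases i
    · exact_mod_cast e0
    · exact_mod_cast e12.trans (Int.gcd_dvd_left _ _)
    · exact_mod_cast e12.trans (Int.gcd_dvd_right _ _)
  set b' : Fin 3 → ℤ := fun i => (ρv i - ρu i) / ((n : ℤ) + 1) with hb'def
  have hb : ∀ i, ρv i - ρu i = ((n : ℤ) + 1) * b' i := fun i =>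
    (Int.mul_ediv_cancel' (hdvd i)).symm
  -- gcd of b' is 1
  have hb1 : Int.gcd (b' 0) ((Int.gcd (b' 1) (b' 2) : ℕ) : ℤ) = 1 := by
    have hcast : ((n : ℤ) + 1) = ((n + 1 : ℕ) : ℤ) := by push_cast; ring
    have h12 : Int.gcd (ρv 1 - ρu 1) (ρv 2 - ρu 2) = (n + 1) * Int.gcd (b' 1) (b' 2) := by
      rw [hb 1, hb 2, Int.gcd_mul_left, hcast, Int.natAbs_natCast]
    have h012 : Int.gcd (ρv 0 - ρu 0) ((Int.gcd (ρv 1 - ρu 1) (ρv 2 - ρu 2) : ℕ) : ℤ)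
        = (n + 1) * Int.gcd (b' 0) ((Int.gcd (b' 1) (b' 2) : ℕ) : ℤ) := by
      rw [hb 0, h12,
        show (((n + 1) * Int.gcd (b' 1) (b' 2) : ℕ) : ℤ)
          = ((n : ℤ) + 1) * ((Int.gcd (b' 1) (b' 2) : ℕ) : ℤ) by push_cast; ring,
        Int.gcd_mul_left, hcast, Int.natAbs_natCast]
    rw [h012] at hguv
    have h1 : (n + 1) * Int.gcd (b' 0) ((Int.gcd (b' 1) (b' 2) : ℕ) : ℤ) = (n + 1) * 1 := by
      rw [mul_one]; exact hguv
    exact Nat.eq_of_mul_eq_mul_left (Nat.succ_pos n) h1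
  -- the short edges have lattice length 1
  have hE := h.t₀.edge_lengths
  rw [h.common_edge_length] at hE
  have hL01 : latticeLength ρ₀ ρu = 1 := by
    have hc := congrArg (Multiset.count (latticeLength ρ₀ ρu)) hE
    have hc1 := congrArg (Multiset.count 1) hE
    simp [Multiset.count_cons, Multiset.count_singleton] at hc hc1
    split_ifs at hc hc1 <;> omega
  have gcd3_neg : ∀ x y z : ℤ, Int.gcd (-x) ((Int.gcd (-y) (-z) : ℕ) : ℤ)
      = Int.gcd x ((Int.gcd y z : ℕ) : ℤ) := by
    intro x y z
    simp [Int.gcd, Int.natAbs_neg]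
  have ha1 : Int.gcd (ρ₀ 0 - ρu 0) ((Int.gcd (ρ₀ 1 - ρu 1) (ρ₀ 2 - ρu 2) : ℕ) : ℤ) = 1 := by
    have h2 := hL01
    unfold latticeLength at h2
    rw [show ρu 0 - ρ₀ 0 = -(ρ₀ 0 - ρu 0) by ring, show ρu 1 - ρ₀ 1 = -(ρ₀ 1 - ρu 1) by ring,
      show ρu 2 - ρ₀ 2 = -(ρ₀ 2 - ρu 2) by ring, gcd3_neg] at h2
    exact h2
  -- apply the basis lemma
  have hkey := key_basis n hn ρ₀ ρu ρv b' hb hb1 ha1 h.t₀.affInd h.t₀.no_interior_point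
    w₀ hw00 hw0u hw0v
  -- expanded dot products
  have hw00' : w₀ 0 * ρ₀ 0 + w₀ 1 * ρ₀ 1 + w₀ 2 * ρ₀ 2 = 1 := by
    simpa [dotProduct, Fin.sum_univ_three] using hw00
  have hw0u' : w₀ 0 * ρu 0 + w₀ 1 * ρu 1 + w₀ 2 * ρu 2 = 1 := by
    simpa [dotProduct, Fin.sum_univ_three] using hw0u
  have hw0v' : w₀ 0 * ρv 0 + w₀ 1 * ρv 1 + w₀ 2 * ρv 2 = 1 := by
    simpa [dotProduct, Fin.sum_univ_three] using hw0v
  have hw1u' : w₁ 0 * ρu 0 + w₁ 1 * ρu 1 + w₁ 2 * ρu 2 = 1 := by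
    simpa [dotProduct, Fin.sum_univ_three] using hw1u
  have hw1v' : w₁ 0 * ρv 0 + w₁ 1 * ρv 1 + w₁ 2 * ρv 2 = 1 := by
    simpa [dotProduct, Fin.sum_univ_three] using hw1v
  set m : ℤ := w₁ ⬝ᵥ ρ₀ - 1 with hm
  have hm' : w₁ 0 * ρ₀ 0 + w₁ 1 * ρ₀ 1 + w₁ 2 * ρ₀ 2 = m + 1 := by
    simp only [hm, dotProduct, Fin.sum_univ_three]
    ring
  -- (w₁ - w₀) · b' = 0
  have hs0 : (w₁ 0 - w₀ 0) * b' 0 + (w₁ 1 - w₀ 1) * b' 1 + (w₁ 2 - w₀ 2) * b' 2 = 0 := by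
    have hmul : ((n : ℤ) + 1) *
        ((w₁ 0 - w₀ 0) * b' 0 + (w₁ 1 - w₀ 1) * b' 1 + (w₁ 2 - w₀ 2) * b' 2) = 0 := by
      linear_combination (- (w₁ 0 - w₀ 0)) * hb 0 + (- (w₁ 1 - w₀ 1)) * hb 1
        + (- (w₁ 2 - w₀ 2)) * hb 2 + hw1v' - hw1u' - hw0v' + hw0u'
    have hne : ((n : ℤ) + 1) ≠ 0 := by omega
    exact (mul_eq_zero.mp hmul).resolve_left hne
  -- m divides each coordinate of w₁ - w₀
  have hrep : ∀ i : Fin 3, m ∣ (w₁ i - w₀ i) := by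
    intro i
    fin_cases i
    · obtain ⟨p, q, r, hz⟩ := hkey ![1, 0, 0]
      have e0 : (1 : ℤ) = p * ρu 0 + q * (ρ₀ 0 - ρu 0) + r * b' 0 := by simpa using hz 0
      have e1 : (0 : ℤ) = p * ρu 1 + q * (ρ₀ 1 - ρu 1) + r * b' 1 := by simpa using hz 1
      have e2 : (0 : ℤ) = p * ρu 2 + q * (ρ₀ 2 - ρu 2) + r * b' 2 := by simpa using hz 2
      show m ∣ w₁ 0 - w₀ 0
      refine ⟨q, ?_⟩
      linear_combination (w₁ 0 - w₀ 0) * e0 + (w₁ 1 - w₀ 1) * e1 + (w₁ 2 - w₀ 2) * e2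
        + p * (hw1u' - hw0u') + q * (hm' - hw00') - q * (hw1u' - hw0u') + r * hs0
    · obtain ⟨p, q, r, hz⟩ := hkey ![0, 1, 0]
      have e0 : (0 : ℤ) = p * ρu 0 + q * (ρ₀ 0 - ρu 0) + r * b' 0 := by simpa using hz 0
      have e1 : (1 : ℤ) = p * ρu 1 + q * (ρ₀ 1 - ρu 1) + r * b' 1 := by simpa using hz 1
      have e2 : (0 : ℤ) = p * ρu 2 + q * (ρ₀ 2 - ρu 2) + r * b' 2 := by simpa using hz 2
      show m ∣ w₁ 1 - w₀ 1
      refine ⟨q, ?_⟩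
      linear_combination (w₁ 0 - w₀ 0) * e0 + (w₁ 1 - w₀ 1) * e1 + (w₁ 2 - w₀ 2) * e2
        + p * (hw1u' - hw0u') + q * (hm' - hw00') - q * (hw1u' - hw0u') + r * hs0
    · obtain ⟨p, q, r, hz⟩ := hkey ![0, 0, 1]
      have e0 : (0 : ℤ) = p * ρu 0 + q * (ρ₀ 0 - ρu 0) + r * b' 0 := by simpa using hz 0
      have e1 : (0 : ℤ) = p * ρu 1 + q * (ρ₀ 1 - ρu 1) + r * b' 1 := by simpa using hz 1
      have e2 : (1 : ℤ) = p * ρu 2 + q * (ρ₀ 2 - ρu 2) + r * b' 2 := by simpa using hz 2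
      show m ∣ w₁ 2 - w₀ 2
      refine ⟨q, ?_⟩
      linear_combination (w₁ 0 - w₀ 0) * e0 + (w₁ 1 - w₀ 1) * e1 + (w₁ 2 - w₀ 2) * e2
        + p * (hw1u' - hw0u') + q * (hm' - hw00') - q * (hw1u' - hw0u') + r * hs0
  -- the gcd divides m
  have hgm : ((latticeLength w₀ w₁ : ℕ) : ℤ) ∣ m := by
    unfold latticeLength
    have g0 : ((Int.gcd (w₁ 0 - w₀ 0) ((Int.gcd (w₁ 1 - w₀ 1) (w₁ 2 - w₀ 2) : ℕ) : ℤ) : ℕ) : ℤ)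
        ∣ (w₁ 0 - w₀ 0) := Int.gcd_dvd_left _ _
    have g12 : ((Int.gcd (w₁ 0 - w₀ 0) ((Int.gcd (w₁ 1 - w₀ 1) (w₁ 2 - w₀ 2) : ℕ) : ℤ) : ℕ) : ℤ)
        ∣ ((Int.gcd (w₁ 1 - w₀ 1) (w₁ 2 - w₀ 2) : ℕ) : ℤ) := Int.gcd_dvd_right _ _
    have g1 := g12.trans (Int.gcd_dvd_left _ _)
    have g2 := g12.trans (Int.gcd_dvd_right _ _)
    have hmexp : m = (w₁ 0 - w₀ 0) * ρ₀ 0 + (w₁ 1 - w₀ 1) * ρ₀ 1 + (w₁ 2 - w₀ 2) * ρ₀ 2 := by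
      linear_combination hw00' - hm'
    rw [hmexp]
    exact dvd_add (dvd_add (g0.mul_right _) (g1.mul_right _)) (g2.mul_right _)
  -- m divides the gcd
  have hmg : m ∣ ((latticeLength w₀ w₁ : ℕ) : ℤ) := by
    unfold latticeLength
    exact Int.dvd_coe_gcd (hrep 0) (Int.dvd_coe_gcd (hrep 1) (hrep 2))
  have habs : ((latticeLength w₀ w₁ : ℕ) : ℤ) = |m| :=
    Int.dvd_antisymm (by positivity) (abs_nonneg m) ((dvd_abs _ _).mpr hgm)
      ((abs_dvd _ _).mpr hmg)
  rw [habs, hm, abs_sub_comm]
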